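/- arXiv:1602.02049 — 2 statements merged into one kernel-verified Lean document; each statement's English description precedes it below -/
import Mathlib

section
/- Let K be a field and F ∈ K[x]^{n×n} be nonsingular and column reduced with column degrees d = (d_1,…,d_n) and d_max = max_j d_j. Then for every integer k ≥ d_max there exist matrix polynomials G, C ∈ K[x]^{n×n} such that x^k·I_n = F·G + C, where deg C < d_max and every entry in row i of G has degree at most k − d_i. -/
open Polynomial Matrix

variable {K : Type*} [Field K]

/-- The degree of a polynomial, as an element of `WithBot ℤ` (`⊥` for the zero polynomial). -/
noncomputable def degZ (p : Polynomial K) : WithBot ℤ :=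
  p.degree.map fun n : ℕ => (n : ℤ)

/-- The shifted column degree `cdeg_u p = max_i (deg p_i + u_i)` of a vector of polynomials. -/
noncomputable def cdegS {m : Type*} [Fintype m] (u : m → ℤ) (p : m → Polynomial K) : WithBot ℤ :=
  Finset.univ.sup fun i => degZ (p i) + (u i : WithBot ℤ)

/-- The row degree of row `i` of a polynomial matrix. -/
noncomputable def rdeg {m n : Type*} [Fintype n] (P : Matrix m n (Polynomial K)) (i : m) :
    WithBot ℕ :=
  Finset.univ.sup fun j => (P i j).degree

/-- The shifted leading coefficient matrix `lcoeff (x^u · A · x^{-v})`. -/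
noncomputable def lcoeffS {m n : Type*} (u : m → ℤ) (A : Matrix m n (Polynomial K)) (v : n → ℤ) :
    Matrix m n K :=
  Matrix.of fun i j => if 0 ≤ v j - u i then (A i j).coeff (v j - u i).toNat else 0

/-- A matrix over `K` has full column rank if its columns are linearly independent over `K`. -/
def FullColRankK {m n : Type*} (M : Matrix m n K) : Prop :=
  LinearIndependent K fun j => fun i => M i j

/-- `A` is `u`-column reduced with `u`-column degrees `v`. -/
def IsColReducedWith {m n : Type*} [Fintype m] (u : m → ℤ) (A : Matrix m n (Polynomial K))
    (v : n → ℤ) : Prop :=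
  (∀ j, cdegS u (fun i => A i j) = (v j : WithBot ℤ)) ∧ FullColRankK (lcoeffS u A v)

/-- `A` is `u`-column reduced. -/
def IsColReducedS {m n : Type*} [Fintype m] (u : m → ℤ) (A : Matrix m n (Polynomial K)) : Prop :=
  ∃ v : n → ℤ, IsColReducedWith u A v

/-- `F` is column reduced with (ordinary) column degrees `d`. -/
def IsColReducedNat {m n : Type*} [Fintype m] (F : Matrix m n (Polynomial K)) (d : n → ℕ) : Prop :=
  IsColReducedWith (fun _ => (0 : ℤ)) F (fun j => (d j : ℤ))

/-- `N` is a (right) kernel basis of `F`. -/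
def IsKernelBasis {m n k : Type*} [Fintype n] [Fintype k] (F : Matrix m n (Polynomial K))
    (N : Matrix n k (Polynomial K)) : Prop :=
  (LinearIndependent (Polynomial K) fun j => fun i => N i j) ∧
  F * N = 0 ∧
  ∀ q : n → Polynomial K, F.mulVec q = 0 → ∃ p : k → Polynomial K, N.mulVec p = q

/-- `N` is an `s`-minimal kernel basis of `F`. -/
def IsMinimalKernelBasis {m n k : Type*} [Fintype n] [Fintype k] (F : Matrix m n (Polynomial K))
    (s : n → ℤ) (N : Matrix n k (Polynomial K)) : Prop :=
  IsKernelBasis F N ∧ IsColReducedS s N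

/-- `T` is a column basis of `F`. -/
def IsColBasis {m n r : Type*} [Fintype n] [Fintype r] (F : Matrix m n (Polynomial K))
    (T : Matrix m r (Polynomial K)) : Prop :=
  (LinearIndependent (Polynomial K) fun j => fun i => T i j) ∧
  ∀ q : m → Polynomial K, (∃ p, F.mulVec p = q) ↔ (∃ p, T.mulVec p = q)

/-- `H` is in (column) Hermite normal form. -/
def IsHermiteForm {n : ℕ} (H : Matrix (Fin n) (Fin n) (Polynomial K)) : Prop :=
  (∀ i j : Fin n, i < j → H i j = 0) ∧
  (∀ i : Fin n, (H i i).Monic) ∧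
  (∀ i j : Fin n, j < i → (H i j).degree < (H i i).degree)

/-- `H` is the Hermite normal form of `F`. -/
def IsHermiteFormOf {n : ℕ} (F H : Matrix (Fin n) (Fin n) (Polynomial K)) : Prop :=
  IsHermiteForm H ∧ ∃ U : Matrix (Fin n) (Fin n) (Polynomial K), IsUnit U.det ∧ F * U = H

private lemma degZ_le_nat {p : Polynomial K} {m : ℕ}
    (h : degZ p ≤ (((m : ℤ)) : WithBot ℤ)) : p.degree ≤ (m : WithBot ℕ) := by
  cases hd : p.degree with
  | bot => simp [hd]
  | coe t =>
    unfold degZ at h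
    rw [hd] at h
    simp only [WithBot.map_coe] at h
    rw [Nat.cast_withBot, WithBot.coe_le_coe] at *
    exact_mod_cast h

private lemma deg_lt_succ_to_le {p : Polynomial K} {s : ℕ}
    (h : p.degree < ((s + 1 : ℕ) : WithBot ℕ)) : p.degree ≤ (s : WithBot ℕ) := by
  rw [degree_lt_iff_coeff_zero] at h
  rw [degree_le_iff_coeff_zero]
  intro m hm
  apply h
  rw [Nat.cast_withBot, Nat.cast_withBot, WithBot.coe_lt_coe] at hm
  omega

private lemma bot_lt_natcast (t : ℕ) : (⊥ : WithBot ℕ) < (t : WithBot ℕ) := by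
  rw [Nat.cast_withBot]; exact WithBot.bot_lt_coe t

private lemma deg_lt_of_le_of_lt {p : Polynomial K} {a b : ℕ}
    (h : p.degree ≤ (a : WithBot ℕ)) (hab : a < b) : p.degree < (b : WithBot ℕ) :=
  lt_of_le_of_lt h (by exact_mod_cast hab)

private lemma div_aux {n : ℕ} (F : Matrix (Fin n) (Fin n) (Polynomial K)) (d : Fin n → ℕ)
    (L : Matrix (Fin n) (Fin n) K)
    (hLdef : ∀ i j, L i j = (F i j).coeff (d j))
    (hLdet : IsUnit L.det)
    (hdeg : ∀ i j, (F i j).degree ≤ (d j : WithBot ℕ))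
    (dmax : ℕ) (hd : ∀ j, d j ≤ dmax) :
    ∀ m : ℕ, ∀ b : Fin n → Polynomial K,
      (∀ i, (b i).degree < ((dmax + m : ℕ) : WithBot ℕ)) →
      ∃ g c : Fin n → Polynomial K, F.mulVec g + c = b ∧
        (∀ i, (c i).degree < (dmax : WithBot ℕ)) ∧
        ∀ i, (g i).degree < ((dmax + m - d i : ℕ) : WithBot ℕ) := by
  intro m
  induction m with
  | zero =>
    intro b hb
    refine ⟨0, b, by simp [Matrix.mulVec_zero], fun i => by simpa using hb i, fun i => ?_⟩
    simpa [Polynomial.degree_zero] using bot_lt_natcast (dmax + 0 - d i)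
  | succ m ih =>
    intro b hb
    set N := dmax + m with hN
    have hdN : ∀ j, d j ≤ N := fun j => le_trans (hd j) (Nat.le_add_right _ _)
    set β : Fin n → K := fun i => (b i).coeff N with hβ
    set α : Fin n → K := L⁻¹.mulVec β with hα
    have hLα : L.mulVec α = β := by
      rw [hα, Matrix.mulVec_mulVec, Matrix.mul_nonsing_inv _ hLdet, Matrix.one_mulVec]
    set g0 : Fin n → Polynomial K := fun j => C (α j) * X ^ (N - d j) with hg0
    have hg0deg : ∀ j, (g0 j).degree ≤ ((N - d j : ℕ) : WithBot ℕ) := fun j =>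
      degree_C_mul_X_pow_le _ _
    have hFg0deg : ∀ i, ((F.mulVec g0) i).degree ≤ (N : WithBot ℕ) := by
      intro i
      rw [show (F.mulVec g0) i = ∑ j, F i j * g0 j from by
        simp [Matrix.mulVec, dotProduct]]
      refine le_trans (Polynomial.degree_sum_le _ _) ?_
      apply Finset.sup_le
      intro j _
      refine le_trans (Polynomial.degree_mul_le _ _) ?_
      calc (F i j).degree + (g0 j).degree
          ≤ (d j : WithBot ℕ) + ((N - d j : ℕ) : WithBot ℕ) :=
            add_le_add (hdeg i j) (hg0deg j)
        _ = (N : WithBot ℕ) := by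
            rw [Nat.cast_withBot, Nat.cast_withBot, Nat.cast_withBot, ← WithBot.coe_add]
            congr 1
            have := hdN j
            omega
    have hFg0coeff : ∀ i, ((F.mulVec g0) i).coeff N = β i := by
      intro i
      have : (F.mulVec g0) i = ∑ j, F i j * g0 j := by
        simp [Matrix.mulVec, dotProduct]
      rw [this, Polynomial.finset_sum_coeff]
      have : ∀ j, (F i j * g0 j).coeff N = L i j * α j := by
        intro j
        rw [hg0]
        rw [show F i j * (C (α j) * X ^ (N - d j)) = F i j * C (α j) * X ^ (N - d j) by ring]
        rw [Polynomial.coeff_mul_X_pow', if_pos (Nat.sub_le _ _)]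
        have hdj := hdN j
        rw [show N - (N - d j) = d j by omega]
        rw [Polynomial.coeff_mul_C, hLdef]
      rw [Finset.sum_congr rfl fun j _ => this j]
      rw [← hLα]
      simp [Matrix.mulVec, dotProduct]
    set b' : Fin n → Polynomial K := fun i => b i - (F.mulVec g0) i with hb'
    have hb'deg : ∀ i, (b' i).degree < ((dmax + m : ℕ) : WithBot ℕ) := by
      intro i
      rw [degree_lt_iff_coeff_zero]
      intro m' hm'
      rw [hb']
      simp only [Polynomial.coeff_sub]
      rcases eq_or_lt_of_le hm' with h | h
      · rw [← h, hFg0coeff]; simp [hβ, hN]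
      · have h1 : (b i).coeff m' = 0 := by
          have := hb i
          rw [degree_lt_iff_coeff_zero] at this
          apply this
          omega
        have h2 : ((F.mulVec g0) i).coeff m' = 0 := by
          apply Polynomial.coeff_eq_zero_of_degree_lt
          exact lt_of_le_of_lt (hFg0deg i) (by exact_mod_cast h)
        rw [h1, h2, sub_zero]
    obtain ⟨g', c, hgc, hc, hg'⟩ := ih b' hb'deg
    refine ⟨g0 + g', c, ?_, hc, ?_⟩
    · rw [Matrix.mulVec_add, add_assoc, hgc]
      funext i
      simp [hb']
    · intro i
      have hlt : N - d i < dmax + (m + 1) - d i := by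
        have := hd i
        omega
      refine lt_of_le_of_lt (Polynomial.degree_add_le _ _) (max_lt ?_ ?_)
      · exact deg_lt_of_le_of_lt (hg0deg i) hlt
      · exact lt_of_lt_of_le (hg' i) (by exact_mod_cast Nat.sub_le_sub_right (Nat.le_succ N) (d i))

set_option maxHeartbeats 1000000 in
/-- Lemma 7: for a nonsingular column reduced `F` with column degrees `d`
and any `k ≥ d_max`, there are polynomial matrices `G`, `C` with `x^k · I = F·G + C`,
`deg C < d_max`, and every entry in row `i` of `G` of degree at most `k - d_i`. -/
theorem power_division_with_remainder {n : ℕ}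
    (F : Matrix (Fin n) (Fin n) (Polynomial K)) (d : Fin n → ℕ)
    (hFns : F.det ≠ 0) (hFcr : IsColReducedNat F d)
    (dmax : ℕ) (hdmax : dmax = Finset.univ.sup d)
    (k : ℕ) (hk : dmax ≤ k) :
    ∃ G C : Matrix (Fin n) (Fin n) (Polynomial K),
      ((Polynomial.X : Polynomial K) ^ k) • (1 : Matrix (Fin n) (Fin n) (Polynomial K)) = F * G + C ∧
      (∀ i j, (C i j).degree < (dmax : WithBot ℕ)) ∧
      (∀ i j, (G i j).degree ≤ ((k - d i : ℕ) : WithBot ℕ)) := by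
  classical
  have hd : ∀ j, d j ≤ dmax := by
    intro j
    rw [hdmax]
    exact Finset.le_sup (Finset.mem_univ j)
  set L : Matrix (Fin n) (Fin n) K :=
    lcoeffS (fun _ => (0 : ℤ)) F (fun j => (d j : ℤ)) with hL
  have hLdef : ∀ i j, L i j = (F i j).coeff (d j) := by
    intro i j
    simp [hL, lcoeffS]
  have hdeg : ∀ i j, (F i j).degree ≤ (d j : WithBot ℕ) := by
    intro i j
    have h1 := hFcr.1 j
    have h2 : degZ (F i j) + (((0 : ℤ)) : WithBot ℤ) ≤ ((d j : ℤ) : WithBot ℤ) := by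
      rw [← h1]
      exact Finset.le_sup (f := fun i => degZ (F i j) + (((0 : ℤ)) : WithBot ℤ))
        (Finset.mem_univ i)
    rw [show (((0 : ℤ)) : WithBot ℤ) = 0 from rfl, add_zero] at h2
    exact degZ_le_nat h2
  have hLdet : IsUnit L.det := by
    rw [isUnit_iff_ne_zero]
    intro h0
    obtain ⟨v, hv0, hv⟩ := Matrix.exists_mulVec_eq_zero_iff.mpr h0
    have hli : LinearIndependent K fun j => fun i => L i j := hFcr.2
    have hz : ∑ j, v j • (fun i => L i j) = 0 := by
      funext i
      have := congrFun hv i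
      simp only [Matrix.mulVec, dotProduct, Pi.zero_apply] at this
      simp only [Finset.sum_apply, Pi.smul_apply, smul_eq_mul, Pi.zero_apply]
      rw [← this]
      exact Finset.sum_congr rfl fun j _ => mul_comm _ _
    have := Fintype.linearIndependent_iff.mp hli v hz
    exact hv0 (funext this)
  have hm : dmax + (k + 1 - dmax) = k + 1 := by omega
  have H : ∀ j0 : Fin n, ∃ g c : Fin n → Polynomial K,
      F.mulVec g + c = (fun i => if i = j0 then X ^ k else 0) ∧
      (∀ i, (c i).degree < (dmax : WithBot ℕ)) ∧
      ∀ i, (g i).degree < ((dmax + (k + 1 - dmax) - d i : ℕ) : WithBot ℕ) := by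
    intro j0
    apply div_aux F d L hLdef hLdet hdeg dmax hd (k + 1 - dmax)
    intro i
    rw [hm]
    split_ifs with h
    · exact deg_lt_of_le_of_lt (Polynomial.degree_X_pow_le k) (Nat.lt_succ_self k)
    · simpa [Polynomial.degree_zero] using bot_lt_natcast (k + 1)
  choose g c hgc hcdeg hgdeg using H
  refine ⟨Matrix.of fun i j => g j i, Matrix.of fun i j => c j i, ?_, ?_, ?_⟩
  · apply Matrix.ext
    intro i j
    have h1 := congrFun (hgc j) i
    simp only [Pi.add_apply] at h1
    have h2 : (F * Matrix.of (fun i j => g j i) + Matrix.of (fun i j => c j i)) i j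
        = (F.mulVec (g j)) i + c j i := by
      simp [Matrix.mul_apply, Matrix.mulVec, dotProduct]
    rw [h2, h1]
    by_cases h : i = j <;>
      simp [Matrix.smul_apply, Matrix.one_apply, h]
  · intro i j
    exact hcdeg j i
  · intro i j
    have h := hgdeg j i
    have he : dmax + (k + 1 - dmax) - d i = (k - d i) + 1 := by
      have := hd i
      omega
    rw [he] at h
    exact deg_lt_succ_to_le h
end

section
/- Let K be a field and let H ∈ K[x]^{n×n} be in Hermite normal form with diagonal degrees s = (s_1,…,s_n). Let d_max ≥ 1 be an integer, and for each i set q_i = ⌊s_i/d_max⌋ and r_i = s_i − q_i·d_max; let n̄ = n + Σ_i q_i, let E ∈ K[x]^{n×n̄} be the matrix [Ẽ_1,…,Ẽ_n] where Ẽ_i = [e_i, x^{s_i−q_i·d_max}·e_i, …, x^{s_i−d_max}·e_i] (q_i+1 columns, e_i the i-th standard basis column), and let s* ∈ ℤ^{n̄} be the concatenation over i of the q_i+1 entries (r_i, d_max, …, d_max). Then there exists a matrix H_E ∈ K[x]^{n̄×n} such that E·H_E = H and the row degrees of H_E are bounded componentwise by s* (equivalently, cdeg_{−s*} H_E ≤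 0). -/
open Polynomial Matrix

variable {K : Type*} [Field K]

lemma divByMonic_X_pow_add (p : Polynomial K) (a b : ℕ) :
    (p /ₘ X ^ a) /ₘ X ^ b = p /ₘ X ^ (a + b) := by
  have hga : (X ^ a : Polynomial K).Monic := monic_X_pow a
  have hgb : (X ^ b : Polynomial K).Monic := monic_X_pow b
  have hgab : (X ^ (a + b) : Polynomial K).Monic := monic_X_pow (a + b)
  have key : (p %ₘ X ^ a + X ^ a * ((p /ₘ X ^ a) %ₘ X ^ b)) + X ^ (a + b) * ((p /ₘ X ^ a) /ₘ X ^ b) = p ∧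
      degree (p %ₘ X ^ a + X ^ a * ((p /ₘ X ^ a) %ₘ X ^ b)) < degree (X ^ (a + b) : Polynomial K) := by
    constructor
    · have h1 := modByMonic_add_div p (X ^ a)
      have h2 := modByMonic_add_div (p /ₘ X ^ a) (X ^ b)
      calc (p %ₘ X ^ a + X ^ a * ((p /ₘ X ^ a) %ₘ X ^ b)) + X ^ (a + b) * ((p /ₘ X ^ a) /ₘ X ^ b)
          = p %ₘ X ^ a + X ^ a * (((p /ₘ X ^ a) %ₘ X ^ b) + X ^ b * ((p /ₘ X ^ a) /ₘ X ^ b)) := by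
            ring
        _ = p := by rw [h2, h1]
    · rw [degree_X_pow]
      apply lt_of_le_of_lt (degree_add_le _ _)
      apply max_lt
      · refine lt_of_lt_of_le ?_ (?_ : ((a : WithBot ℕ)) ≤ ((a + b : ℕ) : WithBot ℕ))
        · simpa using degree_modByMonic_lt p hga
        · exact_mod_cast Nat.le_add_right a b
      · rcases eq_or_ne ((p /ₘ X ^ a) %ₘ X ^ b) 0 with h0 | h0
        · rw [h0, mul_zero, degree_zero]
          exact WithBot.bot_lt_coe _
        · rw [degree_mul, degree_X_pow]
          have hlt := degree_modByMonic_lt (p /ₘ X ^ a) hgb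
          rw [degree_X_pow, degree_eq_natDegree h0] at hlt
          rw [degree_eq_natDegree h0]
          have hlt' : ((p /ₘ X ^ a) %ₘ X ^ b).natDegree < b := by exact_mod_cast hlt
          exact_mod_cast Nat.add_lt_add_left hlt' a
  exact ((div_modByMonic_unique _ _ hgab key).1).symm

/-- offset of chunk `k` -/
def Lfun (r d k : ℕ) : ℕ := if k = 0 then 0 else r + (k - 1) * d

/-- chunk `k` (out of `0,…,qq`) of the polynomial `p` -/
noncomputable def chunkPoly (r d qq : ℕ) (p : Polynomial K) (k : ℕ) : Polynomial K :=
  if k = qq then p /ₘ X ^ Lfun r d qq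
  else if k = 0 then p %ₘ X ^ r
  else (p /ₘ X ^ Lfun r d k) %ₘ X ^ d

lemma tele (p : Polynomial K) (r d : ℕ) (KK : ℕ) :
    (∑ k ∈ Finset.range KK, X ^ Lfun r d k *
        (if k = 0 then p %ₘ X ^ r else (p /ₘ X ^ Lfun r d k) %ₘ X ^ d)) +
      X ^ Lfun r d KK * (p /ₘ X ^ Lfun r d KK) = p := by
  induction KK with
  | zero => simp [Lfun, divByMonic_one]
  | succ K ih =>
    have step : X ^ Lfun r d K *
          (if K = 0 then p %ₘ X ^ r else (p /ₘ X ^ Lfun r d K) %ₘ X ^ d) +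
        X ^ Lfun r d (K + 1) * (p /ₘ X ^ Lfun r d (K + 1)) =
        X ^ Lfun r d K * (p /ₘ X ^ Lfun r d K) := by
      rcases Nat.eq_zero_or_pos K with hK | hK
      · subst hK
        have e0 : Lfun r d 0 = 0 := rfl
        have e1 : Lfun r d 1 = r := by simp [Lfun]
        rw [e0, e1, if_pos rfl, pow_zero, one_mul, one_mul, divByMonic_one]
        exact modByMonic_add_div p (X ^ r)
      · have hK0 : K ≠ 0 := hK.ne'
        have hL : Lfun r d (K + 1) = Lfun r d K + d := by
          obtain ⟨m, rfl⟩ := Nat.exists_eq_succ_of_ne_zero hK0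
          simp only [Lfun, if_neg hK0, if_neg (Nat.succ_ne_zero (m+1)), Nat.succ_sub_one]
          ring
        rw [if_neg hK0, hL, ← divByMonic_X_pow_add p (Lfun r d K) d, pow_add, mul_assoc]
        rw [← mul_add]
        congr 1
        exact modByMonic_add_div (p /ₘ X ^ Lfun r d K) (X ^ d)
    rw [Finset.sum_range_succ, add_assoc, step, ih]

lemma chunk_sum (p : Polynomial K) (r d Q : ℕ) :
    ∑ k ∈ Finset.range (Q + 1), X ^ Lfun r d k * chunkPoly r d Q p k = p := by
  rw [Finset.sum_range_succ]
  have h1 : chunkPoly r d Q p Q = p /ₘ X ^ Lfun r d Q := by simp [chunkPoly]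
  rw [h1, Finset.sum_congr rfl (fun k hk => by
    rw [chunkPoly, if_neg (Finset.mem_range.1 hk).ne])]
  exact tele p r d Q

lemma degZ_le_of_degree_le {p : Polynomial K} {m : ℕ} (h : p.degree ≤ (m : ℕ)) :
    degZ p ≤ ((m : ℤ) : WithBot ℤ) := by
  unfold degZ
  cases hd : p.degree with
  | bot => simp
  | coe k =>
    have hk : k ≤ m := by
      have h2 : p.natDegree = k := natDegree_eq_of_degree_eq_some hd
      have h3 : p.natDegree ≤ m := natDegree_le_iff_degree_le.2 h
      omega
    rw [WithBot.map_coe]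
    exact_mod_cast hk

lemma degZ_le_of_natDegree_le {p : Polynomial K} {m : ℕ} (h : p.natDegree ≤ m) :
    degZ p ≤ ((m : ℤ) : WithBot ℤ) :=
  degZ_le_of_degree_le (le_trans degree_le_natDegree (by exact_mod_cast h))

lemma chunk_deg (p : Polynomial K) (r d Q : ℕ) (hp : p.natDegree ≤ r + Q * d) (k : ℕ) :
    degZ (chunkPoly r d Q p k) ≤ ((if k = 0 then (r : ℤ) else (d : ℤ)) : WithBot ℤ) := by
  rw [chunkPoly]
  by_cases hkQ : k = Q
  · subst hkQ
    rw [if_pos rfl]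
    rcases Nat.eq_zero_or_pos k with h0 | h0
    · subst h0
      rw [if_pos rfl]
      have hL0 : Lfun r d 0 = 0 := rfl
      rw [hL0, pow_zero, divByMonic_one]
      exact degZ_le_of_natDegree_le (by simpa using hp)
    · rw [if_neg h0.ne']
      apply degZ_le_of_natDegree_le
      rw [natDegree_divByMonic _ (monic_X_pow _), natDegree_X_pow]
      obtain ⟨m, rfl⟩ := Nat.exists_eq_succ_of_ne_zero h0.ne'
      have hL : Lfun r d (m + 1) = r + m * d := by
        simp only [Lfun, if_neg (Nat.succ_ne_zero m), Nat.succ_sub_one]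
      rw [hL]
      simp only [Nat.succ_eq_add_one, Nat.add_mul, one_mul] at hp ⊢
      omega
  · rw [if_neg hkQ]
    by_cases hk0 : k = 0
    · rw [if_pos hk0, if_pos hk0]
      apply degZ_le_of_degree_le
      refine le_of_lt ?_
      have := degree_modByMonic_lt p (monic_X_pow r)
      rwa [degree_X_pow] at this
    · rw [if_neg hk0, if_neg hk0]
      apply degZ_le_of_degree_le
      refine le_of_lt ?_
      have := degree_modByMonic_lt (p /ₘ X ^ Lfun r d k) (monic_X_pow d)
      rwa [degree_X_pow] at this


/-- any matrix `H` in Hermite normal form with diagonal degrees `s` can be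
expanded as `H = E · H_E` where the rows of `H_E` have degrees bounded by the expanded shift
`s*` (equivalently `cdeg_{-s*} H_E ≤ 0`).  Rows of `H_E` are indexed by the sigma type
`(i : Fin n) × Fin (q i + 1)`, of cardinality `n̄ = n + Σ q_i`. -/
theorem hermite_expansion_exists {n : ℕ}
    (H : Matrix (Fin n) (Fin n) (Polynomial K)) (hH : IsHermiteForm H)
    (s : Fin n → ℕ) (hs : ∀ i, s i = (H i i).natDegree)
    (dmax : ℕ) (hd1 : 1 ≤ dmax)
    (q r : Fin n → ℕ) (hq : ∀ i, q i = s i / dmax) (hr : ∀ i, r i = s i % dmax)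
    (E : Matrix (Fin n) ((i : Fin n) × Fin (q i + 1)) (Polynomial K))
    (hE : ∀ (a : Fin n) (c : (i : Fin n) × Fin (q i + 1)),
      E a c = if a = c.1 then
          (if c.2 = (0 : Fin (q c.1 + 1)) then 1
            else Polynomial.X ^ (r c.1 + ((c.2 : ℕ) - 1) * dmax))
        else 0)
    (sstar : ((i : Fin n) × Fin (q i + 1)) → ℤ)
    (hsstar : ∀ c, sstar c =
      if c.2 = (0 : Fin (q c.1 + 1)) then (r c.1 : ℤ) else (dmax : ℤ)) :
    ∃ HE : Matrix ((i : Fin n) × Fin (q i + 1)) (Fin n) (Polynomial K),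
      E * HE = H ∧ ∀ c j, degZ (HE c j) ≤ (sstar c : WithBot ℤ) := by
  classical
  refine ⟨Matrix.of fun c j => chunkPoly (r c.1) dmax (q c.1) (H c.1 j) (c.2 : ℕ), ?_, ?_⟩
  · -- product identity
    refine Matrix.ext fun a j => ?_
    rw [Matrix.mul_apply, ← Finset.univ_sigma_univ, Finset.sum_sigma]
    rw [Finset.sum_eq_single a]
    · have hEa : ∀ k : Fin (q a + 1), E a ⟨a, k⟩ = X ^ Lfun (r a) dmax (k : ℕ) := by
        intro k
        rw [hE]
        rcases eq_or_ne (k : ℕ) 0 with hk | hk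
        · have hk' : k = (0 : Fin (q a + 1)) := Fin.ext hk
          simp [hk', Lfun]
        · have hk' : k ≠ (0 : Fin (q a + 1)) := fun h => hk (by simp [h])
          simp [hk', Lfun, hk]
      have hstep : ∀ k : Fin (q a + 1),
          E a ⟨a, k⟩ * (Matrix.of fun (c : (i : Fin n) × Fin (q i + 1)) (j : Fin n) =>
            chunkPoly (r c.1) dmax (q c.1) (H c.1 j) ((c.2 : ℕ))) ⟨a, k⟩ j =
          X ^ Lfun (r a) dmax (k : ℕ) * chunkPoly (r a) dmax (q a) (H a j) (k : ℕ) := by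
        intro k
        rw [hEa k]
        rfl
      rw [Finset.sum_congr rfl fun k _ => hstep k]
      rw [Fin.sum_univ_eq_sum_range
        (fun k => X ^ Lfun (r a) dmax k * chunkPoly (r a) dmax (q a) (H a j) k) (q a + 1)]
      exact chunk_sum (H a j) (r a) dmax (q a)
    · intro i _ hi
      apply Finset.sum_eq_zero
      intro k _
      rw [hE]
      simp only [if_neg (fun h => hi h.symm : ¬ a = i), zero_mul]
    · intro h
      exact absurd (Finset.mem_univ a) h
  · -- degree bounds
    intro c j
    obtain ⟨a, k⟩ := c
    have hdeg : (H a j).natDegree ≤ s a := by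
      rcases lt_trichotomy j a with hlt | heq | hgt
      · rw [hs]
        exact natDegree_le_natDegree (le_of_lt (hH.2.2 a j hlt))
      · rw [heq, hs]
      · rw [hH.1 a j hgt]
        simp
    have hsum : r a + q a * dmax = s a := by
      rw [hr, hq, mul_comm]
      exact Nat.mod_add_div _ _
    have hbd := chunk_deg (H a j) (r a) dmax (q a) (by omega) (k : ℕ)
    have hiff : (k = (0 : Fin (q a + 1))) ↔ ((k : ℕ) = 0) :=
      ⟨fun h => by simp [h], fun h => Fin.ext (by simpa using h)⟩
    rw [hsstar]
    simp only [Matrix.of_apply]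
    by_cases hk0 : (k : ℕ) = 0
    · rw [if_pos (hiff.2 hk0)]
      rw [if_pos hk0] at hbd
      exact hbd
    · rw [if_neg (fun h => hk0 (hiff.1 h))]
      rw [if_neg hk0] at hbd
      exact hbd
end
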